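/- Let |ψ⟩ be the unique ground state of a commuting projector Hamiltonian H = Σ_j P'_j (i.e., the P'_j are pairwise commuting orthogonal projections and ∏_j(1 − P'_j) = |ψ⟩⟨ψ|). Let P, Q be operators such that no P'_j has support intersecting both supp(P) and supp(Q), and such that P commutes with every P'_j whose support is disjoint from supp(P) (automatic from disjoint supports), and similarly for Q. Then ⟨ψ|PQ|ψ⟩ = ⟨ψ|P|ψ⟩⟨ψ|Q|ψ⟩. -/

import Mathlib

open Matrix

/-- An operator `M` on `n` qubits is supported on the set `s` of qubits if its
matrix elements vanish whenever the two basis configurations differ outside `s`,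
and depend only on the configurations inside `s`. -/
def SupportedOn {n : ℕ} (s : Finset (Fin n))
    (M : Matrix (Fin n → Fin 2) (Fin n → Fin 2) ℂ) : Prop :=
  (∀ f g, (∃ j ∉ s, f j ≠ g j) → M f g = 0) ∧
  (∀ f g f' g', (∀ j ∈ s, f j = f' j) → (∀ j ∈ s, g j = g' j) →
    (∀ j ∉ s, f j = g j) → (∀ j ∉ s, f' j = g' j) → M f g = M f' g')

section Aux

variable {R : Type*} [Monoid R]

lemma pairwise_commute_of_forall_mem {l : List R}
    (h : ∀ a ∈ l, ∀ b ∈ l, a * b = b * a) : l.Pairwise Commute := by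
  induction l with
  | nil => exact .nil
  | cons a t ih =>
    exact .cons (fun b hb => h a (List.mem_cons_self) b (List.mem_cons_of_mem _ hb))
      (ih fun x hx y hy => h x (List.mem_cons_of_mem _ hx) y (List.mem_cons_of_mem _ hy))

lemma absorb_mem {l : List R} (hc : ∀ a ∈ l, ∀ b ∈ l, a * b = b * a)
    (hi : ∀ a ∈ l, a * a = a) {x : R} (hx : x ∈ l) : x * l.prod = l.prod := by
  induction l with
  | nil => simp at hx
  | cons h t ih =>
    rw [List.prod_cons]
    rcases List.mem_cons.mp hx with rfl | hx'
    · rw [← mul_assoc, hi x (List.mem_cons_self)]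
    · rw [← mul_assoc, hc x hx h (List.mem_cons_self), mul_assoc,
        ih (fun a ha b hb => hc a (List.mem_cons_of_mem _ ha) b (List.mem_cons_of_mem _ hb))
          (fun a ha => hi a (List.mem_cons_of_mem _ ha)) hx']

lemma absorb_subset {l L : List R} (hc : ∀ a ∈ L, ∀ b ∈ L, a * b = b * a)
    (hi : ∀ a ∈ L, a * a = a) (hsub : ∀ a ∈ l, a ∈ L) :
    l.prod * L.prod = L.prod := by
  induction l with
  | nil => simp
  | cons h t ih =>
    rw [List.prod_cons, mul_assoc,
      ih fun a ha => hsub a (List.mem_cons_of_mem _ ha),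
      absorb_mem hc hi (hsub h (List.mem_cons_self))]

lemma commute_prod_prod {l L : List R} (hc : ∀ a ∈ l, ∀ b ∈ L, a * b = b * a) :
    l.prod * L.prod = L.prod * l.prod := by
  exact (Commute.list_prod_right L l.prod fun x hx =>
    (Commute.list_prod_right l x fun y hy => (hc y hy x hx).symm).symm).eq

lemma absorb_subset' {l L : List R} (hc : ∀ a ∈ L, ∀ b ∈ L, a * b = b * a)
    (hi : ∀ a ∈ L, a * a = a) (hsub : ∀ a ∈ l, a ∈ L) :
    L.prod * l.prod = L.prod := by
  rw [← commute_prod_prod fun a ha b hb => hc a (hsub a ha) b hb,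
    absorb_subset hc hi hsub]

end Aux

lemma sandwich_eq {ι : Type*} [Fintype ι] (ψ : ι → ℂ) (A : Matrix ι ι ℂ) :
    vecMulVec ψ (star ψ) * A * vecMulVec ψ (star ψ)
      = (star ψ ⬝ᵥ A.mulVec ψ) • vecMulVec ψ (star ψ) := by
  ext i k
  simp only [Matrix.mul_apply, Matrix.vecMulVec_apply, Matrix.smul_apply, smul_eq_mul,
    Matrix.mulVec, dotProduct, Pi.star_apply, Finset.sum_mul, Finset.mul_sum]
  rw [Finset.sum_comm]
  exact Finset.sum_congr rfl fun j _ => Finset.sum_congr rfl fun l _ => by ring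

/-- Zero correlation length for the unique ground state of a commuting
projector Hamiltonian: if `∏ⱼ (1 - P'ⱼ) = |ψ⟩⟨ψ|` and no projector `P'ⱼ` has
support intersecting both `supp P` and `supp Q`, and `P` (resp. `Q`) commutes
with every `P'ⱼ` whose support is disjoint from that of `P` (resp. `Q`), then
`⟨ψ|PQ|ψ⟩ = ⟨ψ|P|ψ⟩⟨ψ|Q|ψ⟩`. -/
theorem commuting_projector_ground_state_clustering {n m : ℕ}
    (P' : Fin m → Matrix (Fin n → Fin 2) (Fin n → Fin 2) ℂ)
    (supp' : Fin m → Finset (Fin n))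
    (hsupp' : ∀ j, SupportedOn (supp' j) (P' j))
    (hproj : ∀ j, (P' j)ᴴ = P' j ∧ P' j * P' j = P' j)
    (hcomm : ∀ j k, P' j * P' k = P' k * P' j)
    (ψ : (Fin n → Fin 2) → ℂ) (hψ : star ψ ⬝ᵥ ψ = 1)
    (hground : ((List.finRange m).map fun j => 1 - P' j).prod
        = Matrix.vecMulVec ψ (star ψ))
    (P Q : Matrix (Fin n → Fin 2) (Fin n → Fin 2) ℂ)
    (sP sQ : Finset (Fin n))
    (hPsupp : SupportedOn sP P) (hQsupp : SupportedOn sQ Q)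
    (hsep : ∀ j, Disjoint (supp' j) sP ∨ Disjoint (supp' j) sQ)
    (hPcomm : ∀ j, Disjoint (supp' j) sP → P * P' j = P' j * P)
    (hQcomm : ∀ j, Disjoint (supp' j) sQ → Q * P' j = P' j * Q) :
    star ψ ⬝ᵥ (P * Q).mulVec ψ
      = (star ψ ⬝ᵥ P.mulVec ψ) * (star ψ ⬝ᵥ Q.mulVec ψ) := by
  classical
  set g : Fin m → Matrix (Fin n → Fin 2) (Fin n → Fin 2) ℂ := fun j => 1 - P' j with hg
  -- basic algebraic facts about the factors
  have hfc : ∀ j k, g j * g k = g k * g j := by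
    intro j k
    simp only [hg, mul_sub, sub_mul, mul_one, one_mul]
    rw [hcomm j k]; abel
  have hfi : ∀ j, g j * g j = g j := by
    intro j
    simp only [hg, mul_sub, sub_mul, mul_one, one_mul, (hproj j).2]
    abel
  have hPf : ∀ j, Disjoint (supp' j) sP → P * g j = g j * P := by
    intro j hd; simp only [hg, mul_sub, sub_mul, mul_one, one_mul, hPcomm j hd]
  have hQf : ∀ j, Disjoint (supp' j) sQ → Q * g j = g j * Q := by
    intro j hd; simp only [hg, mul_sub, sub_mul, mul_one, one_mul, hQcomm j hd]
  set L : List (Matrix (Fin n → Fin 2) (Fin n → Fin 2) ℂ) :=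
    (List.finRange m).map g with hL
  have hmemL : ∀ a ∈ L, ∃ j, g j = a := by
    intro a ha
    obtain ⟨j, _, hj⟩ := List.mem_map.mp ha
    exact ⟨j, hj⟩
  have hcL : ∀ a ∈ L, ∀ b ∈ L, a * b = b * a := by
    intro a ha b hb
    obtain ⟨j, rfl⟩ := hmemL a ha
    obtain ⟨k, rfl⟩ := hmemL b hb
    exact hfc j k
  have hiL : ∀ a ∈ L, a * a = a := by
    intro a ha
    obtain ⟨j, rfl⟩ := hmemL a ha
    exact hfi j
  set Pi : Matrix (Fin n → Fin 2) (Fin n → Fin 2) ℂ := L.prod with hPi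
  have hgr : Pi = Matrix.vecMulVec ψ (star ψ) := hground
  -- the two partial products
  set pb : Fin m → Bool := fun j => decide (Disjoint (supp' j) sP) with hpb
  set l₁ : List (Matrix (Fin n → Fin 2) (Fin n → Fin 2) ℂ) :=
    ((List.finRange m).filter pb).map g with hl₁
  set l₂ : List (Matrix (Fin n → Fin 2) (Fin n → Fin 2) ℂ) :=
    ((List.finRange m).filter (fun j => !pb j)).map g with hl₂
  have hsub₁ : ∀ a ∈ l₁, a ∈ L := by
    intro a ha
    obtain ⟨j, hj, rfl⟩ := List.mem_map.mp ha
    exact List.mem_map.mpr ⟨j, List.mem_finRange j, rfl⟩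
  have hsub₂ : ∀ a ∈ l₂, a ∈ L := by
    intro a ha
    obtain ⟨j, hj, rfl⟩ := List.mem_map.mp ha
    exact List.mem_map.mpr ⟨j, List.mem_finRange j, rfl⟩
  have hab : l₁.prod * l₂.prod = Pi := by
    rw [← List.prod_append, ← List.map_append]
    refine List.Perm.prod_eq' ((List.filter_append_perm pb (List.finRange m)).map g) ?_
    refine pairwise_commute_of_forall_mem ?_
    intro a ha b hb
    obtain ⟨j, _, rfl⟩ := List.mem_map.mp ha
    obtain ⟨k, _, rfl⟩ := List.mem_map.mp hb
    exact hfc j k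
  have haPi : Pi * l₁.prod = Pi := absorb_subset' hcL hiL hsub₁
  have hbPi : l₂.prod * Pi = Pi := absorb_subset hcL hiL hsub₂
  have hPa : P * l₁.prod = l₁.prod * P := by
    refine (Commute.list_prod_right l₁ P ?_)
    intro x hx
    obtain ⟨j, hj, rfl⟩ := List.mem_map.mp hx
    have := (List.mem_filter.mp hj).2
    exact hPf j (by simpa [hpb] using this)
  have hQb : Q * l₂.prod = l₂.prod * Q := by
    refine (Commute.list_prod_right l₂ Q ?_)
    intro x hx
    obtain ⟨j, hj, rfl⟩ := List.mem_map.mp hx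
    have h2 := (List.mem_filter.mp hj).2
    have hnd : ¬ Disjoint (supp' j) sP := by simpa [hpb] using h2
    exact hQf j ((hsep j).resolve_left hnd)
  -- key matrix identity
  set a := l₁.prod
  set b := l₂.prod
  have F1 : ∀ X, a * (P * X) = P * (a * X) := by
    intro X; rw [← mul_assoc, ← hPa, mul_assoc]
  have F2 : ∀ X, b * (Q * X) = Q * (b * X) := by
    intro X; rw [← mul_assoc, ← hQb, mul_assoc]
  have key : Pi * (P * (Q * Pi)) = Pi * (P * (Pi * (Q * Pi))) := by
    calc Pi * (P * (Q * Pi))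
        = Pi * (P * (Q * (b * Pi))) := by rw [hbPi]
      _ = Pi * (P * (b * (Q * Pi))) := by rw [← F2]
      _ = (Pi * a) * (P * (b * (Q * Pi))) := by rw [haPi]
      _ = Pi * (a * (P * (b * (Q * Pi)))) := by rw [mul_assoc]
      _ = Pi * (P * (a * (b * (Q * Pi)))) := by rw [F1]
      _ = Pi * (P * ((a * b) * (Q * Pi))) := by rw [mul_assoc]
      _ = Pi * (P * (Pi * (Q * Pi))) := by rw [hab]
  -- rewrite both sides as scalar multiples of Pi
  have hsand : ∀ A : Matrix (Fin n → Fin 2) (Fin n → Fin 2) ℂ,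
      Pi * A * Pi = (star ψ ⬝ᵥ A.mulVec ψ) • Pi := by
    intro A; rw [hgr]; exact sandwich_eq ψ A
  have lhs_eq : Pi * (P * (Q * Pi)) = (star ψ ⬝ᵥ (P * Q).mulVec ψ) • Pi := by
    rw [← hsand (P * Q)]; noncomm_ring
  have rhs_eq : Pi * (P * (Pi * (Q * Pi)))
      = ((star ψ ⬝ᵥ P.mulVec ψ) * (star ψ ⬝ᵥ Q.mulVec ψ)) • Pi := by
    have h1 : Pi * (Q * Pi) = (star ψ ⬝ᵥ Q.mulVec ψ) • Pi := by
      rw [← hsand Q]; noncomm_ring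
    rw [h1, Matrix.mul_smul, Matrix.mul_smul, ← mul_assoc, hsand P, smul_smul,
      mul_comm (star ψ ⬝ᵥ P.mulVec ψ)]
  have htr : Pi.trace = 1 := by
    rw [hgr, ← hψ]
    simp [Matrix.trace, Matrix.diag, Matrix.vecMulVec_apply, dotProduct, mul_comm]
  have := key
  rw [lhs_eq, rhs_eq] at this
  have := congrArg Matrix.trace this
  simpa [Matrix.trace_smul, htr] using this
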